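/- Let Ω be an n×n real matrix with Ω_{j k} ≥ 0 for all j ≠ k and all column sums zero, with basins N_1, …, N_{n_B}. For each basin N_η and each j ∈ N_η let t_{η,j} be the sum of the weights of all rooted spanning trees of N_η with root j, and set T_η = ∑_{j ∈ N_η} t_{η,j}. Then T_η > 0 for every η, and, defining Λ_{η,∞} ∈ ℝⁿ by (Λ_{η,∞})_j = t_{η,j}/T_η for j ∈ N_η and 0 otherwise, the set {Λ ∈ ℝⁿ : Ω·Λ = 0, Λ_j ≥ 0 for all j, ∑_j Λ_j = 1} equals the set of convex combinations {∑_{η=1}^{n_B} s_η Λ_{η,∞} : s_η ≥ 0, ∑_η s_η = 1}. -/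

import Mathlib

open scoped Classical

/-- Edge of the digraph `G_Ω`: for `k ≠ j`, there is an edge from `k` to `j` iff `Ω j k ≠ 0`. -/
def edgeRel {n : ℕ} (Ω : Matrix (Fin n) (Fin n) ℝ) (k j : Fin n) : Prop :=
  k ≠ j ∧ Ω j k ≠ 0

/-- Reachability in `G_Ω`: the reflexive-transitive closure of the edge relation. -/
def reaches {n : ℕ} (Ω : Matrix (Fin n) (Fin n) ℝ) : Fin n → Fin n → Prop :=
  Relation.ReflTransGen (edgeRel Ω)

/-- `S` is a strongly connected component of `G_Ω`. -/
def IsSCC {n : ℕ} (Ω : Matrix (Fin n) (Fin n) ℝ) (S : Set (Fin n)) : Prop :=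
  S.Nonempty ∧ ∀ u ∈ S, ∀ v : Fin n, (v ∈ S ↔ (reaches Ω u v ∧ reaches Ω v u))

/-- A basin: a strongly connected component with no outgoing edges. -/
def IsBasin {n : ℕ} (Ω : Matrix (Fin n) (Fin n) ℝ) (S : Set (Fin n)) : Prop :=
  IsSCC Ω S ∧ ∀ j ∈ S, ∀ k : Fin n, k ∉ S → Ω k j = 0

/-- A parent function encoding a rooted spanning tree of the subset `S` with root `r`:
`p r = r`, vertices outside `S` are fixed, `S` maps into `S`, and every vertex of `S`
iterates to `r`. -/
def IsTreeOn {n : ℕ} (S : Set (Fin n)) (r : Fin n) (p : Fin n → Fin n) : Prop :=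
  p r = r ∧ (∀ v : Fin n, v ∉ S → p v = v) ∧ (∀ v ∈ S, p v ∈ S) ∧
    ∀ v ∈ S, ∃ m : ℕ, p^[m] v = r

/-- `t_{S,r}`: the total weight of all rooted spanning trees of `S` with root `r`. -/
noncomputable def treeOnSum {n : ℕ} (Ω : Matrix (Fin n) (Fin n) ℝ) (S : Set (Fin n))
    (r : Fin n) : ℝ :=
  ∑ p ∈ Finset.univ.filter (fun p : Fin n → Fin n => IsTreeOn S r p),
    ∏ v ∈ Finset.univ.filter (fun v => v ∈ S ∧ v ≠ r), Ω (p v) v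

/-- `T_S = ∑_{r ∈ S} t_{S,r}`. -/
noncomputable def basinTotal {n : ℕ} (Ω : Matrix (Fin n) (Fin n) ℝ) (S : Set (Fin n)) : ℝ :=
  ∑ r ∈ Finset.univ.filter (fun r : Fin n => r ∈ S), treeOnSum Ω S r

/-- The stationary vector `Λ_{S,∞}` of a basin `S`. -/
noncomputable def statVec {n : ℕ} (Ω : Matrix (Fin n) (Fin n) ℝ) (S : Set (Fin n)) :
    Fin n → ℝ :=
  fun j => if j ∈ S then treeOnSum Ω S j / basinTotal Ω S else 0

section Helpers

variable {n : ℕ} {Ω : Matrix (Fin n) (Fin n) ℝ} {S : Set (Fin n)}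

lemma basin_mem_of_edge (hB : IsBasin Ω S) {j k : Fin n} (hj : j ∈ S) (h : Ω k j ≠ 0) :
    k ∈ S := by
  by_contra hk; exact h (hB.2 j hj k hk)

lemma basin_mem_of_reaches (hB : IsBasin Ω S) {j v : Fin n} (hj : j ∈ S)
    (h : reaches Ω j v) : v ∈ S := by
  induction h with
  | refl => exact hj
  | tail _ he ih => exact basin_mem_of_edge hB ih he.2

lemma iterate_mem {p : Fin n → Fin n} (hp : ∀ v ∈ S, p v ∈ S) {v : Fin n} (hv : v ∈ S)
    (m : ℕ) : p^[m] v ∈ S := by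
  induction m with
  | zero => exact hv
  | succ m ih => rw [Function.iterate_succ_apply']; exact hp _ ih

lemma exists_iterate_update_eq (p : Fin n → Fin n) (a c : Fin n) :
    ∀ (m : ℕ) (v : Fin n), p^[m] v = a → ∃ m', (Function.update p a c)^[m'] v = a := by
  intro m
  induction m with
  | zero => exact fun v h => ⟨0, h⟩
  | succ m ih =>
    intro v h
    by_cases hva : v = a
    · exact ⟨0, hva⟩
    · rw [Function.iterate_succ_apply] at h
      obtain ⟨m', hm'⟩ := ih (p v) h
      exact ⟨m' + 1, by rw [Function.iterate_succ_apply, Function.update_of_ne hva]; exact hm'⟩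

lemma tree_ne_self {r : Fin n} {p : Fin n → Fin n} (hp : IsTreeOn S r p) {v : Fin n}
    (hv : v ∈ S) (hvr : v ≠ r) : p v ≠ v := by
  intro h
  obtain ⟨m, hm⟩ := hp.2.2.2 v hv
  rw [Function.iterate_fixed h m] at hm
  exact hvr hm

lemma treeWeight_nonneg (hoff : ∀ j k : Fin n, j ≠ k → 0 ≤ Ω j k) {r : Fin n}
    {p : Fin n → Fin n} (hp : IsTreeOn S r p) :
    0 ≤ ∏ v ∈ Finset.univ.filter (fun v => v ∈ S ∧ v ≠ r), Ω (p v) v := by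
  refine Finset.prod_nonneg fun v hv => ?_
  simp only [Finset.mem_filter, Finset.mem_univ, true_and] at hv
  exact hoff _ _ (tree_ne_self hp hv.1 hv.2)

lemma treeOnSum_nonneg (hoff : ∀ j k : Fin n, j ≠ k → 0 ≤ Ω j k) (r : Fin n) :
    0 ≤ treeOnSum Ω S r := by
  refine Finset.sum_nonneg fun p hp => ?_
  simp only [Finset.mem_filter, Finset.mem_univ, true_and] at hp
  exact treeWeight_nonneg hoff hp

end Helpers

section Pos

variable {n : ℕ} {Ω : Matrix (Fin n) (Fin n) ℝ} {S : Set (Fin n)}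

/-- path of length `m` from `v` to `r` along edges. -/
def pl {n : ℕ} (Ω : Matrix (Fin n) (Fin n) ℝ) (r : Fin n) : ℕ → Fin n → Prop
  | 0, v => v = r
  | (m+1), v => ∃ w, edgeRel Ω v w ∧ pl Ω r m w

lemma reaches_pl {r v : Fin n} (h : reaches Ω v r) : ∃ m, pl Ω r m v := by
  induction h using Relation.ReflTransGen.head_induction_on with
  | refl => exact ⟨0, rfl⟩
  | head hab _ ih => obtain ⟨m, hm⟩ := ih; exact ⟨m + 1, _, hab, hm⟩

lemma treeOnSum_pos (hoff : ∀ j k : Fin n, j ≠ k → 0 ≤ Ω j k) (hB : IsBasin Ω S)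
    {r : Fin n} (hr : r ∈ S) : 0 < treeOnSum Ω S r := by
  have hreach : ∀ v, v ∈ S → ∃ m, pl Ω r m v := fun v hv =>
    reaches_pl (((hB.1.2 r hr v).mp hv).2)
  set d : Fin n → ℕ := fun v => if h : v ∈ S then Nat.find (hreach v h) else 0 with hd
  have hdspec : ∀ v (hv : v ∈ S), pl Ω r (d v) v := by
    intro v hv; simp only [hd, dif_pos hv]; exact Nat.find_spec (hreach v hv)
  have hdmin : ∀ v (hv : v ∈ S) (m : ℕ), pl Ω r m v → d v ≤ m := by
    intro v hv m hm; simp only [hd, dif_pos hv]; exact Nat.find_le hm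
  have spec : ∀ v, v ∈ S ∧ v ≠ r → ∃ w, edgeRel Ω v w ∧ pl Ω r (d v - 1) w := by
    intro v hv
    have h1 := hdspec v hv.1
    have h0 : d v ≠ 0 := by
      intro h0; rw [h0] at h1; exact hv.2 h1
    rw [← Nat.succ_pred_eq_of_pos (Nat.pos_of_ne_zero h0)] at h1
    exact h1
  set p : Fin n → Fin n := fun v => if h : v ∈ S ∧ v ≠ r then Classical.choose (spec v h) else v
    with hpdef
  have hpv : ∀ v (h : v ∈ S ∧ v ≠ r),
      edgeRel Ω v (p v) ∧ pl Ω r (d v - 1) (p v) := by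
    intro v h; simp only [hpdef, dif_pos h]; exact Classical.choose_spec (spec v h)
  have hmemp : ∀ v, v ∈ S → p v ∈ S := by
    intro v hv
    by_cases h : v ∈ S ∧ v ≠ r
    · exact basin_mem_of_edge hB hv (hpv v h).1.2
    · simp only [hpdef, dif_neg h]; exact hv
  have hdlt : ∀ v (h : v ∈ S ∧ v ≠ r), d (p v) < d v := by
    intro v h
    have h0 : d v ≠ 0 := by
      intro h0
      have h1 := hdspec v h.1
      rw [h0] at h1; exact h.2 h1
    have := hdmin (p v) (hmemp v h.1) _ (hpv v h).2
    omega
  have htree : IsTreeOn S r p := by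
    refine ⟨?_, ?_, hmemp, ?_⟩
    · simp only [hpdef]; rw [dif_neg]; simp
    · intro v hv; simp only [hpdef]; rw [dif_neg]; tauto
    · intro v hv
      have key : ∀ N v, v ∈ S → d v ≤ N → ∃ m, p^[m] v = r := by
        intro N
        induction N with
        | zero =>
          intro v hv hN
          have h1 := hdspec v hv
          rw [Nat.le_zero.mp hN] at h1
          exact ⟨0, h1⟩
        | succ N ih =>
          intro v hv hN
          by_cases hvr : v = r
          · exact ⟨0, hvr⟩
          · have hlt := hdlt v ⟨hv, hvr⟩
            obtain ⟨m, hm⟩ := ih (p v) (hmemp v hv) (by omega)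
            exact ⟨m + 1, by rw [Function.iterate_succ_apply]; exact hm⟩
      exact key (d v) v hv le_rfl
  refine Finset.sum_pos' ?_ ⟨p, ?_, ?_⟩
  · intro q hq
    simp only [Finset.mem_filter, Finset.mem_univ, true_and] at hq
    exact treeWeight_nonneg hoff hq
  · simp only [Finset.mem_filter, Finset.mem_univ, true_and]; exact htree
  · refine Finset.prod_pos fun v hv => ?_
    simp only [Finset.mem_filter, Finset.mem_univ, true_and] at hv
    have he := (hpv v hv).1
    exact lt_of_le_of_ne (hoff _ _ (Ne.symm he.1)) (Ne.symm he.2)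

lemma basinTotal_pos (hoff : ∀ j k : Fin n, j ≠ k → 0 ≤ Ω j k) (hB : IsBasin Ω S) :
    0 < basinTotal Ω S := by
  obtain ⟨r, hr⟩ := hB.1.1
  refine Finset.sum_pos (fun i hi => ?_) ⟨r, by simpa using hr⟩
  simp only [Finset.mem_filter, Finset.mem_univ, true_and] at hi
  exact treeOnSum_pos hoff hB hi

end Pos

section TreeTheorem

variable {n : ℕ} {Ω : Matrix (Fin n) (Fin n) ℝ} {S : Set (Fin n)}

/-- Functional digraphs on `S` in which every vertex eventually reaches `j`,
`j` lies on a (nontrivial) cycle. -/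
def CycTo {n : ℕ} (S : Set (Fin n)) (j : Fin n) (q : Fin n → Fin n) : Prop :=
  (∀ v ∉ S, q v = v) ∧ (∀ v ∈ S, q v ∈ S) ∧ (∀ v ∈ S, ∃ m, q^[m] v = j) ∧
    (∃ m, 0 < m ∧ q^[m] j = j) ∧ q j ≠ j

/-- The predecessor of `j` on its cycle. -/
noncomputable def cpred {n : ℕ} (j : Fin n) (q : Fin n → Fin n) : Fin n :=
  if h : ∃ m, 0 < m ∧ q^[m] j = j then q^[Nat.find h - 1] j else j

lemma cpred_update {k j : Fin n} {p : Fin n → Fin n} (hp : IsTreeOn S k p) (hjS : j ∈ S)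
    (hjk : j ≠ k) :
    cpred j (Function.update p k j) = k ∧
      Function.update (Function.update p k j) k k = p := by
  set q := Function.update p k j with hqdef
  have hqk : q k = j := Function.update_self _ _ _
  have hqo : ∀ v, v ≠ k → q v = p v := fun v hv => Function.update_of_ne hv _ _
  obtain h1 : ∃ m, p^[m] j = k := hp.2.2.2 j hjS
  set s := Nat.find h1 with hsdef
  have hs : p^[s] j = k := Nat.find_spec h1
  have smin : ∀ i, i < s → p^[i] j ≠ k := fun i hi => Nat.find_min h1 hi
  have hs0 : s ≠ 0 := by
    intro h0; rw [h0] at hs; exact hjk hs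
  have agree : ∀ i, i ≤ s → q^[i] j = p^[i] j := by
    intro i
    induction i with
    | zero => intro _; rfl
    | succ i ih =>
      intro hi
      rw [Function.iterate_succ_apply', Function.iterate_succ_apply',
        ih (by omega), hqo _ (smin i (by omega))]
  have hq1 : q^[s + 1] j = j := by
    rw [Function.iterate_succ_apply', agree s le_rfl, hs, hqk]
  have hper : ∃ m, 0 < m ∧ q^[m] j = j := ⟨s + 1, by omega, hq1⟩
  set m0 := Nat.find hper with hm0def
  have hm0 : 0 < m0 ∧ q^[m0] j = j := Nat.find_spec hper
  have m0le : m0 ≤ s + 1 := Nat.find_le ⟨by omega, hq1⟩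
  have m0eq : m0 = s + 1 := by
    by_contra hne
    have hle : m0 ≤ s := by omega
    have hpm0 : p^[m0] j = j := by rw [← agree m0 hle]; exact hm0.2
    have per : ∀ t, p^[m0 * t] j = j := by
      intro t
      induction t with
      | zero => rfl
      | succ t ih =>
        have : m0 * (t + 1) = m0 * t + m0 := by ring
        rw [this, Function.iterate_add_apply, hpm0, ih]
    have hmod : p^[s % m0] j = k := by
      have hdecomp : s % m0 + m0 * (s / m0) = s := Nat.mod_add_div s m0
      calc p^[s % m0] j = p^[s % m0] (p^[m0 * (s / m0)] j) := by rw [per]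
        _ = p^[s % m0 + m0 * (s / m0)] j := (Function.iterate_add_apply _ _ _ _).symm
        _ = p^[s] j := by rw [hdecomp]
        _ = k := hs
    exact smin (s % m0) (by have := Nat.mod_lt s (show 0 < m0 by omega); omega) hmod
  constructor
  · rw [cpred, dif_pos hper, ← hm0def, m0eq]
    simpa using (agree s le_rfl).trans hs
  · rw [hqdef, Function.update_idem]
    have h4 : Function.update p k k = Function.update p k (p k) := by rw [hp.1]
    rw [h4, Function.update_eq_self]

lemma cpred_spec {j : Fin n} {q : Fin n → Fin n} (hq : CycTo S j q) (hj : j ∈ S) :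
    cpred j q ∈ S ∧ cpred j q ≠ j ∧ q (cpred j q) = j ∧
      IsTreeOn S (cpred j q) (Function.update q (cpred j q) (cpred j q)) := by
  obtain ⟨hout, hin, hreach, hper, hqj⟩ := hq
  set m0 := Nat.find hper with hm0def
  have hm0 : 0 < m0 ∧ q^[m0] j = j := Nat.find_spec hper
  have hc : cpred j q = q^[m0 - 1] j := by rw [cpred, dif_pos hper]
  set c := cpred j q with hcdef
  have hcS : c ∈ S := by rw [hc]; exact iterate_mem hin hj _
  have hqc : q c = j := by
    have h2 : m0 - 1 + 1 = m0 := by omega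
    calc q c = q^[m0 - 1 + 1] j := by rw [Function.iterate_succ_apply', hc]
    _ = j := by rw [h2]; exact hm0.2
  have hcj : c ≠ j := by
    intro hcj
    rcases Nat.lt_or_ge 1 m0 with h2 | h2
    · have : q^[m0 - 1] j = j := by rw [← hc, hcj]
      exact Nat.find_min hper (show m0 - 1 < m0 by omega) ⟨by omega, this⟩
    · have hm1 : m0 = 1 := by omega
      apply hqj
      have := hm0.2
      rw [hm1, Function.iterate_one] at this
      exact this
  refine ⟨hcS, hcj, hqc, ?_, ?_, ?_, ?_⟩
  · exact Function.update_self _ _ _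
  · intro v hv
    have hvc : v ≠ c := fun h => hv (h ▸ hcS)
    rw [Function.update_of_ne hvc]; exact hout v hv
  · intro v hv
    by_cases hvc : v = c
    · rw [hvc, Function.update_self]; exact hcS
    · rw [Function.update_of_ne hvc]; exact hin v hv
  · intro v hv
    obtain ⟨a, ha⟩ := hreach v hv
    have hvk : q^[m0 - 1 + a] v = c := by
      rw [Function.iterate_add_apply, ha, ← hc]
    exact exists_iterate_update_eq q c c _ v hvk

end TreeTheorem

section TreeTheorem2

variable {n : ℕ} {Ω : Matrix (Fin n) (Fin n) ℝ} {S : Set (Fin n)}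

lemma filter_erase_eq (S : Set (Fin n)) (k : Fin n) :
    (Finset.univ.filter (fun v : Fin n => v ∈ S)).erase k
      = Finset.univ.filter (fun v => v ∈ S ∧ v ≠ k) := by
  ext v
  simp only [Finset.mem_erase, Finset.mem_filter, Finset.mem_univ, true_and]
  tauto

lemma weight_update {k : Fin n} (hk : k ∈ S) (c : Fin n) (p : Fin n → Fin n) :
    ∏ v ∈ Finset.univ.filter (fun v => v ∈ S), Ω ((Function.update p k c) v) v
      = Ω c k * ∏ v ∈ Finset.univ.filter (fun v => v ∈ S ∧ v ≠ k), Ω (p v) v := by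
  have hkmem : k ∈ Finset.univ.filter (fun v : Fin n => v ∈ S) := by simp [hk]
  rw [← Finset.mul_prod_erase _ _ hkmem, Function.update_self, filter_erase_eq]
  congr 1
  refine Finset.prod_congr rfl fun v hv => ?_
  simp only [Finset.mem_filter, Finset.mem_univ, true_and] at hv
  rw [Function.update_of_ne hv.2]

lemma update_mem_cycto_left (hB : IsBasin Ω S) {j k : Fin n} (hj : j ∈ S) (hk : k ∈ S)
    (hkj : k ≠ j) {p : Fin n → Fin n} (hp : IsTreeOn S k p) :
    CycTo S j (Function.update p k j) := by
  set q := Function.update p k j with hqdef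
  have hqk : q k = j := Function.update_self _ _ _
  have hqo : ∀ v, v ≠ k → q v = p v := fun v hv => Function.update_of_ne hv _ _
  have hreachk : ∀ v ∈ S, ∃ m, q^[m] v = k := by
    intro v hv
    obtain ⟨m, hm⟩ := hp.2.2.2 v hv
    exact exists_iterate_update_eq p k j m v hm
  have hreachj : ∀ v ∈ S, ∃ m, q^[m] v = j := by
    intro v hv
    obtain ⟨m, hm⟩ := hreachk v hv
    exact ⟨m + 1, by rw [Function.iterate_succ_apply', hm, hqk]⟩
  refine ⟨?_, ?_, hreachj, ?_, ?_⟩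
  · intro v hv
    rw [hqo v (fun h => hv (h ▸ hk))]
    exact hp.2.1 v hv
  · intro v hv
    by_cases hvk : v = k
    · rw [hvk, hqk]; exact hj
    · rw [hqo v hvk]; exact hp.2.2.1 v hv
  · obtain ⟨m, hm⟩ := hreachk j hj
    exact ⟨m + 1, by omega, by rw [Function.iterate_succ_apply', hm, hqk]⟩
  · rw [hqo j (Ne.symm hkj)]
    exact tree_ne_self hp hj (Ne.symm hkj)

lemma update_mem_cycto_right (hB : IsBasin Ω S) {j k : Fin n} (hj : j ∈ S) (hk : k ∈ S)
    (hkj : k ≠ j) {p : Fin n → Fin n} (hp : IsTreeOn S j p) :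
    CycTo S j (Function.update p j k) := by
  set q := Function.update p j k with hqdef
  have hqj : q j = k := Function.update_self _ _ _
  have hqo : ∀ v, v ≠ j → q v = p v := fun v hv => Function.update_of_ne hv _ _
  have hreachj : ∀ v ∈ S, ∃ m, q^[m] v = j := by
    intro v hv
    obtain ⟨m, hm⟩ := hp.2.2.2 v hv
    exact exists_iterate_update_eq p j k m v hm
  refine ⟨?_, ?_, hreachj, ?_, ?_⟩
  · intro v hv
    rw [hqo v (fun h => hv (h ▸ hj))]
    exact hp.2.1 v hv
  · intro v hv
    by_cases hvj : v = j
    · rw [hvj, hqj]; exact hk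
    · rw [hqo v hvj]; exact hp.2.2.1 v hv
  · obtain ⟨m, hm⟩ := hreachj k hk
    exact ⟨m + 1, by omega, by rw [Function.iterate_succ_apply, hqj, hm]⟩
  · rw [hqj]; exact hkj

lemma cut_tree_right {j : Fin n} {q : Fin n → Fin n} (hq : CycTo S j q) (hj : j ∈ S) :
    q j ∈ S ∧ q j ≠ j ∧ IsTreeOn S j (Function.update q j j) := by
  obtain ⟨hout, hin, hreach, hper, hqj⟩ := hq
  refine ⟨hin j hj, hqj, Function.update_self _ _ _, ?_, ?_, ?_⟩
  · intro v hv
    rw [Function.update_of_ne (show v ≠ j from fun h => hv (h ▸ hj))]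
    exact hout v hv
  · intro v hv
    by_cases hvj : v = j
    · rw [hvj, Function.update_self]; exact hj
    · rw [Function.update_of_ne hvj]; exact hin v hv
  · intro v hv
    obtain ⟨m, hm⟩ := hreach v hv
    exact exists_iterate_update_eq q j j m v hm

lemma sum_left (hB : IsBasin Ω S) {j : Fin n} (hj : j ∈ S) :
    ∑ k ∈ Finset.univ.filter (fun k : Fin n => k ∈ S ∧ k ≠ j), Ω j k * treeOnSum Ω S k
      = ∑ q ∈ Finset.univ.filter (fun q : Fin n → Fin n => CycTo S j q),
          ∏ v ∈ Finset.univ.filter (fun v => v ∈ S), Ω (q v) v := by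
  have hprod := Finset.sum_finset_product'
    (Finset.univ.filter (fun kp : Fin n × (Fin n → Fin n) =>
      (kp.1 ∈ S ∧ kp.1 ≠ j) ∧ IsTreeOn S kp.1 kp.2))
    (Finset.univ.filter (fun k : Fin n => k ∈ S ∧ k ≠ j))
    (fun k => Finset.univ.filter (fun p : Fin n → Fin n => IsTreeOn S k p))
    (fun kp => by simp only [Finset.mem_filter, Finset.mem_univ, true_and])
    (f := fun k p => Ω j k * ∏ v ∈ Finset.univ.filter (fun v => v ∈ S ∧ v ≠ k), Ω (p v) v)
  have step1 : ∑ k ∈ Finset.univ.filter (fun k : Fin n => k ∈ S ∧ k ≠ j),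
      Ω j k * treeOnSum Ω S k
      = ∑ kp ∈ Finset.univ.filter (fun kp : Fin n × (Fin n → Fin n) =>
          (kp.1 ∈ S ∧ kp.1 ≠ j) ∧ IsTreeOn S kp.1 kp.2),
          Ω j kp.1 * ∏ v ∈ Finset.univ.filter (fun v => v ∈ S ∧ v ≠ kp.1), Ω (kp.2 v) v := by
    rw [hprod]
    refine Finset.sum_congr rfl fun k hk => ?_
    rw [treeOnSum, Finset.mul_sum]
  rw [step1]
  refine Finset.sum_bij' (fun a _ => Function.update a.2 a.1 j)
    (fun q _ => (cpred j q, Function.update q (cpred j q) (cpred j q)))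
    ?_ ?_ ?_ ?_ ?_
  · intro a ha
    simp only [Finset.mem_filter, Finset.mem_univ, true_and] at ha ⊢
    exact update_mem_cycto_left hB hj ha.1.1 ha.1.2 ha.2
  · intro q hq
    simp only [Finset.mem_filter, Finset.mem_univ, true_and] at hq ⊢
    obtain ⟨hcS, hcj, _, htree⟩ := cpred_spec hq hj
    exact ⟨⟨hcS, hcj⟩, htree⟩
  · intro a ha
    simp only [Finset.mem_filter, Finset.mem_univ, true_and] at ha
    obtain ⟨h1, h2⟩ := cpred_update ha.2 hj (Ne.symm ha.1.2)
    show (cpred j (Function.update a.2 a.1 j),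
        Function.update (Function.update a.2 a.1 j) (cpred j (Function.update a.2 a.1 j))
          (cpred j (Function.update a.2 a.1 j))) = a
    rw [h1, h2]
  · intro q hq
    simp only [Finset.mem_filter, Finset.mem_univ, true_and] at hq
    obtain ⟨hcS, hcj, hqc, htree⟩ := cpred_spec hq hj
    show Function.update (Function.update q (cpred j q) (cpred j q)) (cpred j q) j = q
    have h6 : Function.update q (cpred j q) j
        = Function.update q (cpred j q) (q (cpred j q)) := by rw [hqc]
    rw [Function.update_idem, h6, Function.update_eq_self]
  · intro a ha
    simp only [Finset.mem_filter, Finset.mem_univ, true_and] at ha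
    show Ω j a.1 * ∏ v ∈ Finset.univ.filter (fun v => v ∈ S ∧ v ≠ a.1), Ω (a.2 v) v
      = ∏ v ∈ Finset.univ.filter (fun v => v ∈ S), Ω ((Function.update a.2 a.1 j) v) v
    rw [weight_update ha.1.1]

lemma sum_right (hB : IsBasin Ω S) {j : Fin n} (hj : j ∈ S) :
    ∑ k ∈ Finset.univ.filter (fun k : Fin n => k ∈ S ∧ k ≠ j), Ω k j * treeOnSum Ω S j
      = ∑ q ∈ Finset.univ.filter (fun q : Fin n → Fin n => CycTo S j q),
          ∏ v ∈ Finset.univ.filter (fun v => v ∈ S), Ω (q v) v := by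
  have hprod := Finset.sum_finset_product'
    (Finset.univ.filter (fun kp : Fin n × (Fin n → Fin n) =>
      (kp.1 ∈ S ∧ kp.1 ≠ j) ∧ IsTreeOn S j kp.2))
    (Finset.univ.filter (fun k : Fin n => k ∈ S ∧ k ≠ j))
    (fun _ => Finset.univ.filter (fun p : Fin n → Fin n => IsTreeOn S j p))
    (fun kp => by simp only [Finset.mem_filter, Finset.mem_univ, true_and])
    (f := fun k p => Ω k j * ∏ v ∈ Finset.univ.filter (fun v => v ∈ S ∧ v ≠ j), Ω (p v) v)
  have step1 : ∑ k ∈ Finset.univ.filter (fun k : Fin n => k ∈ S ∧ k ≠ j),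
      Ω k j * treeOnSum Ω S j
      = ∑ kp ∈ Finset.univ.filter (fun kp : Fin n × (Fin n → Fin n) =>
          (kp.1 ∈ S ∧ kp.1 ≠ j) ∧ IsTreeOn S j kp.2),
          Ω kp.1 j * ∏ v ∈ Finset.univ.filter (fun v => v ∈ S ∧ v ≠ j), Ω (kp.2 v) v := by
    rw [hprod]
    refine Finset.sum_congr rfl fun k hk => ?_
    rw [treeOnSum, Finset.mul_sum]
  rw [step1]
  refine Finset.sum_bij' (fun a _ => Function.update a.2 j a.1)
    (fun q _ => (q j, Function.update q j j))
    ?_ ?_ ?_ ?_ ?_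
  · intro a ha
    simp only [Finset.mem_filter, Finset.mem_univ, true_and] at ha ⊢
    exact update_mem_cycto_right hB hj ha.1.1 ha.1.2 ha.2
  · intro q hq
    simp only [Finset.mem_filter, Finset.mem_univ, true_and] at hq ⊢
    obtain ⟨h1, h2, h3⟩ := cut_tree_right hq hj
    exact ⟨⟨h1, h2⟩, h3⟩
  · intro a ha
    simp only [Finset.mem_filter, Finset.mem_univ, true_and] at ha
    have h4 : Function.update a.2 j j = a.2 := by
      have h5 : Function.update a.2 j j = Function.update a.2 j (a.2 j) := by rw [ha.2.1]
      rw [h5, Function.update_eq_self]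
    show (Function.update a.2 j a.1 j, Function.update (Function.update a.2 j a.1) j j) = a
    rw [Function.update_self, Function.update_idem, h4]
  · intro q hq
    simp only [Finset.mem_filter, Finset.mem_univ, true_and] at hq
    show Function.update (Function.update q j j) j (q j) = q
    rw [Function.update_idem, Function.update_eq_self]
  · intro a ha
    simp only [Finset.mem_filter, Finset.mem_univ, true_and] at ha
    show Ω a.1 j * ∏ v ∈ Finset.univ.filter (fun v => v ∈ S ∧ v ≠ j), Ω (a.2 v) v
      = ∏ v ∈ Finset.univ.filter (fun v => v ∈ S), Ω ((Function.update a.2 j a.1) v) v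
    rw [weight_update hj]

end TreeTheorem2

section Kernel

variable {n : ℕ} {Ω : Matrix (Fin n) (Fin n) ℝ} {S : Set (Fin n)}

lemma tree_kernel (hcol : ∀ k : Fin n, ∑ j, Ω j k = 0) (hB : IsBasin Ω S) {j : Fin n}
    (hj : j ∈ S) :
    ∑ k ∈ Finset.univ.filter (fun k : Fin n => k ∈ S), Ω j k * treeOnSum Ω S k = 0 := by
  have hjmem : j ∈ Finset.univ.filter (fun k : Fin n => k ∈ S) := by simp [hj]
  rw [← Finset.add_sum_erase _ _ hjmem, filter_erase_eq S j]
  have hdiag : Ω j j = -∑ k ∈ Finset.univ.filter (fun k : Fin n => k ∈ S ∧ k ≠ j), Ω k j := by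
    have h0 := hcol j
    rw [← Finset.add_sum_erase Finset.univ _ (Finset.mem_univ j)] at h0
    have h1 : ∑ k ∈ Finset.univ.erase j, Ω k j
        = ∑ k ∈ Finset.univ.filter (fun k : Fin n => k ∈ S ∧ k ≠ j), Ω k j := by
      refine (Finset.sum_subset ?_ ?_).symm
      · intro k hk
        simp only [Finset.mem_filter, Finset.mem_univ, true_and] at hk
        simp [hk.2]
      · intro k hk1 hk2
        simp only [Finset.mem_erase, Finset.mem_univ, and_true] at hk1
        simp only [Finset.mem_filter, Finset.mem_univ, true_and, not_and] at hk2
        exact hB.2 j hj k (fun hkS => (hk2 hkS) hk1)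
    rw [h1] at h0
    linarith
  rw [hdiag, sum_left hB hj, neg_mul, Finset.sum_mul, sum_right hB hj]
  exact neg_add_cancel _

lemma statVec_nonneg (hoff : ∀ j k : Fin n, j ≠ k → 0 ≤ Ω j k) (hB : IsBasin Ω S)
    (j : Fin n) : 0 ≤ statVec Ω S j := by
  rw [statVec]
  split
  · exact div_nonneg (treeOnSum_nonneg hoff j) (basinTotal_pos hoff hB).le
  · exact le_rfl

lemma sum_statVec (hoff : ∀ j k : Fin n, j ≠ k → 0 ≤ Ω j k) (hB : IsBasin Ω S) :
    ∑ j, statVec Ω S j = 1 := by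
  have hT := basinTotal_pos hoff hB
  have h1 : ∑ j, statVec Ω S j
      = ∑ j ∈ Finset.univ.filter (fun j : Fin n => j ∈ S), treeOnSum Ω S j / basinTotal Ω S := by
    rw [Finset.sum_filter]
    refine Finset.sum_congr rfl fun j _ => ?_
    rw [statVec]
  rw [h1, ← Finset.sum_div, ← basinTotal, div_self hT.ne']

lemma mulVec_statVec (hoff : ∀ j k : Fin n, j ≠ k → 0 ≤ Ω j k)
    (hcol : ∀ k : Fin n, ∑ j, Ω j k = 0) (hB : IsBasin Ω S) :
    Ω.mulVec (statVec Ω S) = 0 := by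
  have hT := basinTotal_pos hoff hB
  funext j
  have hmv : Ω.mulVec (statVec Ω S) j = ∑ k, Ω j k * statVec Ω S k := rfl
  have hsplit : ∑ k, Ω j k * statVec Ω S k
      = ∑ k ∈ Finset.univ.filter (fun k : Fin n => k ∈ S),
          Ω j k * (treeOnSum Ω S k / basinTotal Ω S) := by
    rw [Finset.sum_filter]
    refine Finset.sum_congr rfl fun k _ => ?_
    rw [statVec]
    split
    · rfl
    · rw [mul_zero]
  rw [hmv, hsplit]
  by_cases hj : j ∈ S
  · have : ∑ k ∈ Finset.univ.filter (fun k : Fin n => k ∈ S),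
        Ω j k * (treeOnSum Ω S k / basinTotal Ω S)
        = (∑ k ∈ Finset.univ.filter (fun k : Fin n => k ∈ S),
            Ω j k * treeOnSum Ω S k) / basinTotal Ω S := by
      rw [Finset.sum_div]
      exact Finset.sum_congr rfl fun k _ => by ring
    rw [this, tree_kernel hcol hB hj, zero_div]
    rfl
  · have : ∀ k ∈ Finset.univ.filter (fun k : Fin n => k ∈ S),
        Ω j k * (treeOnSum Ω S k / basinTotal Ω S) = 0 := by
      intro k hk
      simp only [Finset.mem_filter, Finset.mem_univ, true_and] at hk
      rw [hB.2 k hk j hj, zero_mul]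
    rw [Finset.sum_eq_zero this]
    rfl

lemma basin_eq_of_mem (hB : IsBasin Ω S) {S' : Set (Fin n)} (hB' : IsBasin Ω S')
    {x : Fin n} (hx : x ∈ S) (hx' : x ∈ S') : S = S' := by
  ext v
  constructor
  · intro hv; exact (hB'.1.2 x hx' v).mpr ((hB.1.2 x hx v).mp hv)
  · intro hv; exact (hB.1.2 x hx v).mpr ((hB'.1.2 x hx' v).mp hv)

lemma exists_basin (Ω : Matrix (Fin n) (Fin n) ℝ) (v : Fin n) :
    ∃ S : Set (Fin n), IsBasin Ω S ∧ ∃ u ∈ S, reaches Ω v u := by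
  classical
  set R : Fin n → Finset (Fin n) := fun u => Finset.univ.filter (fun w => reaches Ω u w)
    with hR
  have hmemR : ∀ u w, w ∈ R u ↔ reaches Ω u w := by
    intro u w; simp [hR]
  obtain ⟨u, hu, hmin⟩ := Finset.exists_min_image (R v) (fun u => (R u).card)
    ⟨v, (hmemR v v).mpr Relation.ReflTransGen.refl⟩
  have hvu : reaches Ω v u := (hmemR v u).mp hu
  have hback : ∀ w, reaches Ω u w → reaches Ω w u := by
    intro w hw
    have hsub : R w ⊆ R u := fun x hx => (hmemR u x).mpr (hw.trans ((hmemR w x).mp hx))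
    have hwRv : w ∈ R v := (hmemR v w).mpr (hvu.trans hw)
    have heq : R w = R u := Finset.eq_of_subset_of_card_le hsub (hmin w hwRv)
    have : u ∈ R w := heq ▸ ((hmemR u u).mpr Relation.ReflTransGen.refl)
    exact (hmemR w u).mp this
  refine ⟨{w | reaches Ω u w ∧ reaches Ω w u}, ⟨⟨⟨u, Relation.ReflTransGen.refl,
    Relation.ReflTransGen.refl⟩, ?_⟩, ?_⟩, u,
    ⟨Relation.ReflTransGen.refl, Relation.ReflTransGen.refl⟩, hvu⟩
  · intro a ha w
    obtain ⟨ha1, ha2⟩ := ha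
    constructor
    · rintro ⟨h1, h2⟩; exact ⟨ha2.trans h1, h2.trans ha1⟩
    · rintro ⟨h1, h2⟩; exact ⟨ha1.trans h1, h2.trans ha2⟩
  · intro a ha k hk
    by_contra hO
    have hak : a ≠ k := fun h => hk (h ▸ ha)
    have hru : reaches Ω u k := ha.1.trans (Relation.ReflTransGen.single ⟨hak, hO⟩)
    exact hk ⟨hru, hback k hru⟩

end Kernel

section Support

variable {n : ℕ} {Ω : Matrix (Fin n) (Fin n) ℝ} {S : Set (Fin n)}

lemma stationary_zero_step (hoff : ∀ j k : Fin n, j ≠ k → 0 ≤ Ω j k)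
    {Λ : Fin n → ℝ} (hst : Ω.mulVec Λ = 0) (hnn : ∀ j, 0 ≤ Λ j)
    {j k : Fin n} (hj0 : Λ j = 0) (hk : Ω j k ≠ 0) (hkj : k ≠ j) : Λ k = 0 := by
  have h0 : ∑ l, Ω j l * Λ l = 0 := congrFun hst j
  rw [← Finset.add_sum_erase _ _ (Finset.mem_univ j), hj0, mul_zero, zero_add] at h0
  have hnonneg : ∀ l ∈ Finset.univ.erase j, 0 ≤ Ω j l * Λ l := by
    intro l hl
    simp only [Finset.mem_erase, Finset.mem_univ, and_true] at hl
    exact mul_nonneg (hoff j l (Ne.symm hl)) (hnn l)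
  have := (Finset.sum_eq_zero_iff_of_nonneg hnonneg).mp h0 k (by simp [hkj])
  rcases mul_eq_zero.mp this with h | h
  · exact absurd h hk
  · exact h

lemma stationary_zero_reaches (hoff : ∀ j k : Fin n, j ≠ k → 0 ≤ Ω j k)
    {Λ : Fin n → ℝ} (hst : Ω.mulVec Λ = 0) (hnn : ∀ j, 0 ≤ Λ j)
    {j k : Fin n} (h : reaches Ω k j) (hj0 : Λ j = 0) : Λ k = 0 := by
  induction h using Relation.ReflTransGen.head_induction_on with
  | refl => exact hj0
  | head hab _ ih => exact stationary_zero_step hoff hst hnn ih hab.2 hab.1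

lemma exists_boundary {P : Fin n → Prop} {v u : Fin n} (h : reaches Ω v u) (hu : ¬ P u) :
    P v → ∃ a b, P a ∧ ¬ P b ∧ edgeRel Ω a b ∧ reaches Ω v a := by
  induction h using Relation.ReflTransGen.head_induction_on with
  | refl => exact fun hv => absurd hv hu
  | @head x c hxc _ ih =>
    intro hx
    by_cases hc : P c
    · obtain ⟨a, b, ha, hb, he, hr⟩ := ih hc
      exact ⟨a, b, ha, hb, he, Relation.ReflTransGen.head hxc hr⟩
    · exact ⟨x, c, hx, hc, hxc, Relation.ReflTransGen.refl⟩

lemma not_basin_zero (hoff : ∀ j k : Fin n, j ≠ k → 0 ≤ Ω j k)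
    (hcol : ∀ k : Fin n, ∑ j, Ω j k = 0)
    {Λ : Fin n → ℝ} (hst : Ω.mulVec Λ = 0) (hnn : ∀ j, 0 ≤ Λ j)
    {v : Fin n} (hv : ∀ S : Set (Fin n), IsBasin Ω S → v ∉ S) : Λ v = 0 := by
  classical
  by_contra hΛv
  set U : Finset (Fin n) :=
    Finset.univ.filter (fun j => ∀ S : Set (Fin n), IsBasin Ω S → j ∉ S) with hU
  have hmemU : ∀ j, j ∈ U ↔ ∀ S : Set (Fin n), IsBasin Ω S → j ∉ S := by
    intro j; simp [hU]
  -- the total flow out of U vanishes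
  have hsum0 : ∑ k ∈ U, (∑ j ∈ Uᶜ, Ω j k) * Λ k = 0 := by
    have h1 : ∑ j ∈ U, ∑ k, Ω j k * Λ k = 0 :=
      Finset.sum_eq_zero fun j _ => congrFun hst j
    rw [Finset.sum_comm] at h1
    -- h1 : ∑ k, ∑ j ∈ U, Ω j k * Λ k = 0
    have h2 : ∀ k, k ∉ U → ∑ j ∈ U, Ω j k * Λ k = 0 := by
      intro k hk
      refine Finset.sum_eq_zero fun j hj => ?_
      rw [hmemU] at hj
      rw [hmemU] at hk
      push_neg at hk
      obtain ⟨Sk, hSk, hkSk⟩ := hk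
      rw [hSk.2 k hkSk j (hj Sk hSk), zero_mul]
    have h3 : ∑ k ∈ U, ∑ j ∈ U, Ω j k * Λ k = 0 := by
      rw [← h1]
      exact Finset.sum_subset (Finset.subset_univ U) (fun k _ hk => h2 k hk)
    have h4 : ∀ k ∈ U, ∑ j ∈ U, Ω j k * Λ k
        = -((∑ j ∈ Uᶜ, Ω j k) * Λ k) := by
      intro k _
      have h5 : ∑ j ∈ U, Ω j k + ∑ j ∈ Uᶜ, Ω j k
          = ∑ j, Ω j k := Finset.sum_add_sum_compl U _
      have h6 : ∑ j ∈ U, Ω j k = -(∑ j ∈ Uᶜ, Ω j k) := by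
        have := hcol k
        linarith
      rw [← Finset.sum_mul, h6, neg_mul]
    rw [Finset.sum_congr rfl h4, Finset.sum_neg_distrib] at h3
    linarith
  -- each summand is nonneg, hence zero
  have hterms : ∀ k ∈ U, (∑ j ∈ Uᶜ, Ω j k) * Λ k = 0 := by
    refine (Finset.sum_eq_zero_iff_of_nonneg ?_).mp hsum0
    intro k hk
    refine mul_nonneg (Finset.sum_nonneg fun j hj => ?_) (hnn k)
    rw [Finset.mem_compl] at hj
    exact hoff j k (fun h => hj (h ▸ hk))
  -- find a boundary edge from the support
  obtain ⟨Sb, hSb, u, huSb, hvu⟩ := exists_basin Ω v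
  have hunotU : ¬ (u ∈ U) := by
    rw [hmemU]; push_neg; exact ⟨Sb, hSb, huSb⟩
  have hvU : v ∈ U := (hmemU v).mpr hv
  obtain ⟨a, b, haU, hbU, he, hva⟩ :=
    exists_boundary (P := fun x => x ∈ U) hvu hunotU hvU
  have hΛa : Λ a ≠ 0 := fun h => hΛv (stationary_zero_reaches hoff hst hnn hva h)
  have hterm := hterms a haU
  rcases mul_eq_zero.mp hterm with h | h
  · -- the boundary sum is positive at b
    have hpos : 0 < ∑ j ∈ Uᶜ, Ω j a := by
      refine Finset.sum_pos' (fun j hj => ?_) ⟨b, Finset.mem_compl.mpr hbU, ?_⟩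
      · rw [Finset.mem_compl] at hj
        exact hoff j a (fun hja => hj (hja ▸ haU))
      · exact lt_of_le_of_ne (hoff b a (fun hba => hbU (hba ▸ haU))) (Ne.symm he.2)
    exact hpos.ne' h
  · exact hΛa h

end Support

section Unique

variable {n : ℕ} {Ω : Matrix (Fin n) (Fin n) ℝ} {S : Set (Fin n)}

lemma stationary_on_basin (hoff : ∀ j k : Fin n, j ≠ k → 0 ≤ Ω j k)
    (hcol : ∀ k : Fin n, ∑ j, Ω j k = 0) (hB : IsBasin Ω S)
    {Λ : Fin n → ℝ} (hst : Ω.mulVec Λ = 0) (hnn : ∀ j, 0 ≤ Λ j) :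
    ∀ j ∈ S, Λ j = (∑ i ∈ Finset.univ.filter (fun i : Fin n => i ∈ S), Λ i) * statVec Ω S j := by
  classical
  have hT := basinTotal_pos hoff hB
  have tpos : ∀ j ∈ S, 0 < treeOnSum Ω S j := fun j hj => treeOnSum_pos hoff hB hj
  -- restricted stationarity
  have hres : ∀ j ∈ S, ∑ k ∈ Finset.univ.filter (fun k : Fin n => k ∈ S), Ω j k * Λ k = 0 := by
    intro j hj
    have h0 : ∑ k, Ω j k * Λ k = 0 := congrFun hst j
    rw [← h0]
    refine Finset.sum_subset (Finset.subset_univ _) ?_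
    intro k _ hk
    simp only [Finset.mem_filter, Finset.mem_univ, true_and] at hk
    by_cases hbk : ∃ S' : Set (Fin n), IsBasin Ω S' ∧ k ∈ S'
    · obtain ⟨S', hB', hkS'⟩ := hbk
      have hjS' : j ∉ S' := by
        intro hjS'
        exact hk ((basin_eq_of_mem hB' hB hjS' hj) ▸ hkS')
      rw [hB'.2 k hkS' j hjS', zero_mul]
    · push_neg at hbk
      rw [not_basin_zero hoff hcol hst hnn (fun S' hS' => hbk S' hS'), mul_zero]
  -- the minimizing vertex
  obtain ⟨j0, hj0mem, hj0min⟩ := Finset.exists_min_image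
    (Finset.univ.filter (fun i : Fin n => i ∈ S)) (fun i => Λ i / treeOnSum Ω S i)
    (by obtain ⟨x, hx⟩ := hB.1.1; exact ⟨x, by simp [hx]⟩)
  have hj0S : j0 ∈ S := by simpa using hj0mem
  set c := Λ j0 / treeOnSum Ω S j0 with hc
  set y : Fin n → ℝ := fun i => Λ i - c * treeOnSum Ω S i with hy
  have hy0 : y j0 = 0 := by
    simp only [hy, hc]
    rw [div_mul_cancel₀ _ (tpos j0 hj0S).ne']
    ring
  have hynn : ∀ i ∈ S, 0 ≤ y i := by
    intro i hi
    have h1 : c ≤ Λ i / treeOnSum Ω S i := hj0min i (by simp [hi])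
    have h2 : c * treeOnSum Ω S i ≤ Λ i := by
      rw [← le_div_iff₀ (tpos i hi)]
      exact h1
    simp only [hy]
    linarith
  have hyst : ∀ j ∈ S, ∑ k ∈ Finset.univ.filter (fun k : Fin n => k ∈ S), Ω j k * y k = 0 := by
    intro j hj
    have h1 := hres j hj
    have h2 := tree_kernel hcol hB hj
    have h3 : ∑ k ∈ Finset.univ.filter (fun k : Fin n => k ∈ S), Ω j k * y k
        = (∑ k ∈ Finset.univ.filter (fun k : Fin n => k ∈ S), Ω j k * Λ k)
          - c * ∑ k ∈ Finset.univ.filter (fun k : Fin n => k ∈ S), Ω j k * treeOnSum Ω S k := by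
      rw [Finset.mul_sum, ← Finset.sum_sub_distrib]
      exact Finset.sum_congr rfl fun k _ => by simp only [hy]; ring
    rw [h3, h1, h2, mul_zero, sub_zero]
  -- propagate the zero of y backwards
  have hprop : ∀ k, reaches Ω k j0 → k ∈ S → y k = 0 := by
    intro k hreach
    induction hreach using Relation.ReflTransGen.head_induction_on with
    | refl => exact fun _ => hy0
    | @head x w hxw hwj0 ih =>
      intro hxS
      have hwS : w ∈ S := basin_mem_of_edge hB hxS hxw.2
      have hyw : y w = 0 := ih hwS
      have h1 := hyst w hwS
      have hwmem : w ∈ Finset.univ.filter (fun k : Fin n => k ∈ S) := by simp [hwS]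
      rw [← Finset.add_sum_erase _ _ hwmem, hyw, mul_zero, zero_add] at h1
      have hnonneg : ∀ l ∈ (Finset.univ.filter (fun k : Fin n => k ∈ S)).erase w,
          0 ≤ Ω w l * y l := by
        intro l hl
        simp only [Finset.mem_erase, Finset.mem_filter, Finset.mem_univ, true_and] at hl
        exact mul_nonneg (hoff w l (Ne.symm hl.1)) (hynn l hl.2)
      have h2 := (Finset.sum_eq_zero_iff_of_nonneg hnonneg).mp h1 x
        (by simp only [Finset.mem_erase, Finset.mem_filter, Finset.mem_univ, true_and]
            exact ⟨fun h => hxw.1 h, hxS⟩)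
      rcases mul_eq_zero.mp h2 with h | h
      · exact absurd h hxw.2
      · exact h
  have hΛc : ∀ j ∈ S, Λ j = c * treeOnSum Ω S j := by
    intro j hj
    have hr : reaches Ω j j0 := ((hB.1.2 j0 hj0S j).mp hj).2
    have := hprop j hr hj
    simp only [hy] at this
    linarith
  -- identify the total mass
  have hmass : ∑ i ∈ Finset.univ.filter (fun i : Fin n => i ∈ S), Λ i = c * basinTotal Ω S := by
    rw [basinTotal, Finset.mul_sum]
    refine Finset.sum_congr rfl fun i hi => ?_
    simp only [Finset.mem_filter, Finset.mem_univ, true_and] at hi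
    exact hΛc i hi
  intro j hj
  rw [hmass, hΛc j hj, statVec, if_pos hj]
  field_simp

end Unique


theorem stmt7 (n : ℕ) (Ω : Matrix (Fin n) (Fin n) ℝ)
    (hoff : ∀ j k : Fin n, j ≠ k → 0 ≤ Ω j k)
    (hcol : ∀ k : Fin n, ∑ j, Ω j k = 0) :
    (∀ S : Set (Fin n), IsBasin Ω S → 0 < basinTotal Ω S) ∧
    {Λ : Fin n → ℝ | Ω.mulVec Λ = 0 ∧ (∀ j, 0 ≤ Λ j) ∧ (∑ j, Λ j) = 1} =
      {Λ : Fin n → ℝ | ∃ s : {S : Set (Fin n) // IsBasin Ω S} → ℝ,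
        (∀ η, 0 ≤ s η) ∧ (∑ η, s η) = 1 ∧ Λ = ∑ η, s η • statVec Ω η.1} := by
  constructor
  · exact fun S hS => basinTotal_pos hoff hS
  ext Λ
  simp only [Set.mem_setOf_eq]
  constructor
  · rintro ⟨hst, hnn, hsum⟩
    have hΛeq : Λ = ∑ η : {S : Set (Fin n) // IsBasin Ω S},
        (∑ i ∈ Finset.univ.filter (fun i : Fin n => i ∈ η.1), Λ i) • statVec Ω η.1 := by
      funext j
      rw [Finset.sum_apply]
      by_cases hbj : ∃ S0 : Set (Fin n), IsBasin Ω S0 ∧ j ∈ S0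
      · obtain ⟨S0, hB0, hjS0⟩ := hbj
        rw [Finset.sum_eq_single (⟨S0, hB0⟩ : {S : Set (Fin n) // IsBasin Ω S})]
        · simp only [Pi.smul_apply, smul_eq_mul]
          exact stationary_on_basin hoff hcol hB0 hst hnn j hjS0
        · intro η _ hne
          simp only [Pi.smul_apply, smul_eq_mul]
          have hjη : j ∉ η.1 := by
            intro hjη
            exact hne (Subtype.ext (basin_eq_of_mem η.2 hB0 hjη hjS0))
          rw [statVec, if_neg hjη, mul_zero]
        · intro h; exact absurd (Finset.mem_univ _) h
      · push_neg at hbj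
        rw [not_basin_zero hoff hcol hst hnn (fun S' h => hbj S' h)]
        refine (Finset.sum_eq_zero fun η _ => ?_).symm
        simp only [Pi.smul_apply, smul_eq_mul]
        rw [statVec, if_neg (hbj η.1 η.2), mul_zero]
    refine ⟨fun η => ∑ i ∈ Finset.univ.filter (fun i : Fin n => i ∈ η.1), Λ i,
      fun η => Finset.sum_nonneg fun i _ => hnn i, ?_, hΛeq⟩
    calc ∑ η : {S : Set (Fin n) // IsBasin Ω S},
          ∑ i ∈ Finset.univ.filter (fun i : Fin n => i ∈ η.1), Λ i
        = ∑ η : {S : Set (Fin n) // IsBasin Ω S},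
            (∑ i ∈ Finset.univ.filter (fun i : Fin n => i ∈ η.1), Λ i)
              * ∑ j, statVec Ω η.1 j := by
          refine Finset.sum_congr rfl fun η _ => ?_
          rw [sum_statVec hoff η.2, mul_one]
      _ = ∑ η : {S : Set (Fin n) // IsBasin Ω S},
            ∑ j, (∑ i ∈ Finset.univ.filter (fun i : Fin n => i ∈ η.1), Λ i)
              * statVec Ω η.1 j := by
          refine Finset.sum_congr rfl fun η _ => ?_
          rw [Finset.mul_sum]
      _ = ∑ j, ∑ η : {S : Set (Fin n) // IsBasin Ω S},
            (∑ i ∈ Finset.univ.filter (fun i : Fin n => i ∈ η.1), Λ i)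
              * statVec Ω η.1 j := Finset.sum_comm
      _ = ∑ j, Λ j := by
          refine Finset.sum_congr rfl fun j _ => ?_
          conv_rhs => rw [congrFun hΛeq j]
          rw [Finset.sum_apply]
          exact Finset.sum_congr rfl fun η _ => by
            simp only [Pi.smul_apply, smul_eq_mul]
      _ = 1 := hsum
  · rintro ⟨s, hs0, hs1, rfl⟩
    refine ⟨?_, ?_, ?_⟩
    · have h0 : Ω.mulVec (∑ η : {S : Set (Fin n) // IsBasin Ω S}, s η • statVec Ω η.1)
          = ∑ η : {S : Set (Fin n) // IsBasin Ω S}, s η • Ω.mulVec (statVec Ω η.1) := by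
        rw [show Ω.mulVec (∑ η : {S : Set (Fin n) // IsBasin Ω S}, s η • statVec Ω η.1)
          = Ω.mulVecLin (∑ η : {S : Set (Fin n) // IsBasin Ω S}, s η • statVec Ω η.1) from rfl]
        rw [map_sum]
        refine Finset.sum_congr rfl fun η _ => ?_
        rw [map_smul]
        rfl
      rw [h0, Finset.sum_congr rfl
        (fun η _ => by rw [mulVec_statVec hoff hcol η.2, smul_zero])]
      exact Finset.sum_const_zero
    · intro j
      rw [Finset.sum_apply]
      refine Finset.sum_nonneg fun η _ => ?_
      simp only [Pi.smul_apply, smul_eq_mul]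
      exact mul_nonneg (hs0 η) (statVec_nonneg hoff η.2 j)
    · calc ∑ j, (∑ η : {S : Set (Fin n) // IsBasin Ω S}, s η • statVec Ω η.1) j
          = ∑ j, ∑ η : {S : Set (Fin n) // IsBasin Ω S}, s η * statVec Ω η.1 j := by
            refine Finset.sum_congr rfl fun j _ => ?_
            rw [Finset.sum_apply]
            exact Finset.sum_congr rfl fun η _ => by
              simp only [Pi.smul_apply, smul_eq_mul]
        _ = ∑ η : {S : Set (Fin n) // IsBasin Ω S}, ∑ j, s η * statVec Ω η.1 j :=
            Finset.sum_comm
        _ = ∑ η : {S : Set (Fin n) // IsBasin Ω S}, s η := by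
            refine Finset.sum_congr rfl fun η _ => ?_
            rw [← Finset.mul_sum, sum_statVec hoff η.2, mul_one]
        _ = 1 := hs1
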